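/- For 0 < q1 < q2 < q ≤ 2, the minimum value u_min = -((q-q2)/sin((q-q2)π/2))^((q-q2)/(q2-q1)) · (sin((q-q1)π/2)/(q-q1))^((q-q1)/(q2-q1)) · (q2-q1)/sin((q2-q1)π/2) satisfies u_min > -1. -/

import Mathlib

open Real

/-- sin (x*π/2) is positive for x ∈ (0,2). -/
lemma aux_sin_pos {x : ℝ} (hx : 0 < x) (hx2 : x < 2) : 0 < Real.sin (x * Real.pi / 2) := by
  apply Real.sin_pos_of_pos_of_lt_pi
  · positivity
  · have : x * Real.pi / 2 < 2 * Real.pi / 2 := by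
      have := Real.pi_pos
      gcongr
    linarith [this]

/-- h(x) = log x - log (sin (xπ/2)) is strictly monotone on (0,2). -/
lemma aux_strictMono :
    StrictMonoOn (fun x : ℝ => Real.log x - Real.log (Real.sin (x * Real.pi / 2)))
      (Set.Ioo 0 2) := by
  have hpi := Real.pi_pos
  apply StrictMonoOn.mono (s := Set.Ioo 0 2) ?_ le_rfl
  apply strictMonoOn_of_deriv_pos (convex_Ioo 0 2)
  · apply ContinuousOn.sub
    · exact Real.continuousOn_log.comp continuousOn_id (fun x hx => ne_of_gt hx.1)
    · apply Real.continuousOn_log.comp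
      · exact (Real.continuous_sin.comp (by continuity)).continuousOn
      · exact fun x hx => ne_of_gt (aux_sin_pos hx.1 hx.2)
  · intro x hx
    rw [interior_Ioo] at hx
    obtain ⟨hx0, hx2⟩ := hx
    have hs : 0 < Real.sin (x * Real.pi / 2) := aux_sin_pos hx0 hx2
    have hd1 : HasDerivAt (fun y : ℝ => Real.log y) (1 / x) x := by
      simpa [one_div] using Real.hasDerivAt_log (ne_of_gt hx0)
    have hd2 : HasDerivAt (fun y : ℝ => y * Real.pi / 2) (Real.pi / 2) x := by
      simpa using ((hasDerivAt_id x).mul_const Real.pi).div_const 2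
    have hd3 : HasDerivAt (fun y : ℝ => Real.sin (y * Real.pi / 2))
        (Real.cos (x * Real.pi / 2) * (Real.pi / 2)) x :=
      by have := (Real.hasDerivAt_sin (x * Real.pi / 2)).comp x hd2; exact this
    have hd4 : HasDerivAt (fun y : ℝ => Real.log (Real.sin (y * Real.pi / 2)))
        (Real.cos (x * Real.pi / 2) * (Real.pi / 2) / Real.sin (x * Real.pi / 2)) x := by
      have := (Real.hasDerivAt_log (ne_of_gt hs)).comp x hd3
      simpa [div_eq_inv_mul, mul_comm, Function.comp_def] using this
    have hd : HasDerivAt (fun y : ℝ => Real.log y - Real.log (Real.sin (y * Real.pi / 2)))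
        (1 / x - Real.cos (x * Real.pi / 2) * (Real.pi / 2) / Real.sin (x * Real.pi / 2)) x :=
      hd1.sub hd4
    rw [hd.deriv]
    set θ := x * Real.pi / 2 with hθ
    have hθ0 : 0 < θ := by positivity
    have key : Real.cos θ * (Real.pi / 2) / Real.sin θ < 1 / x := by
      rcases le_or_gt (Real.cos θ) 0 with hc | hc
      · have : Real.cos θ * (Real.pi / 2) / Real.sin θ ≤ 0 := by
          apply div_nonpos_of_nonpos_of_nonneg
          · exact mul_nonpos_of_nonpos_of_nonneg hc (by positivity)
          · exact le_of_lt hs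
        linarith [one_div_pos.mpr hx0]
      · -- cos θ > 0, and θ < π since x < 2; so θ < π/2
        have hθpi : θ < Real.pi := by
          rw [hθ]
          nlinarith
        have hθlt : θ < Real.pi / 2 := by
          by_contra hcon
          push_neg at hcon
          have : Real.cos θ ≤ 0 := Real.cos_nonpos_of_pi_div_two_le_of_le hcon (by linarith)
          linarith
        have htan : θ < Real.tan θ := Real.lt_tan hθ0 hθlt
        rw [Real.tan_eq_sin_div_cos] at htan
        -- θ < sin θ / cos θ  ⟹  θ cos θ < sin θ
        have hsc : θ * Real.cos θ < Real.sin θ := by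
          have := (lt_div_iff₀ hc).mp htan
          linarith
        rw [div_lt_div_iff₀ hs hx0]
        have hxθ : x = θ * (2 / Real.pi) := by
          rw [hθ]; field_simp
        calc Real.cos θ * (Real.pi / 2) * x = θ * Real.cos θ := by
              rw [hxθ]; field_simp
          _ < Real.sin θ := hsc
          _ = 1 * Real.sin θ := by ring
    linarith [key]

theorem stmt_10 (q q1 q2 : ℝ) (h1 : 0 < q1) (h2 : q1 < q2) (h3 : q2 < q) (h4 : q ≤ 2) :
    -1 <
      -(((q - q2) / Real.sin ((q - q2) * Real.pi / 2)) ^ ((q - q2) / (q2 - q1)) *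
        (Real.sin ((q - q1) * Real.pi / 2) / (q - q1)) ^ ((q - q1) / (q2 - q1)) *
        ((q2 - q1) / Real.sin ((q2 - q1) * Real.pi / 2))) := by
  set a := q - q2 with ha
  set b := q2 - q1 with hb
  have hc : q - q1 = a + b := by rw [ha, hb]; ring
  have ha0 : 0 < a := by simp [ha]; linarith
  have hb0 : 0 < b := by simp [hb]; linarith
  have hab2 : a + b < 2 := by rw [ha, hb] at *; linarith
  have ha2 : a < 2 := by linarith
  have hb2 : b < 2 := by linarith
  have hsa : 0 < Real.sin (a * Real.pi / 2) := aux_sin_pos ha0 ha2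
  have hsb : 0 < Real.sin (b * Real.pi / 2) := aux_sin_pos hb0 hb2
  have hsc : 0 < Real.sin ((a + b) * Real.pi / 2) := aux_sin_pos (by linarith) hab2
  set h : ℝ → ℝ := fun x => Real.log x - Real.log (Real.sin (x * Real.pi / 2)) with hh
  have hmono := aux_strictMono
  have hha : h a < h (a + b) :=
    hmono ⟨ha0, ha2⟩ ⟨by linarith, hab2⟩ (by linarith)
  have hhb : h b < h (a + b) :=
    hmono ⟨hb0, hb2⟩ ⟨by linarith, hab2⟩ (by linarith)
  -- superadditivity: a * h a + b * h b < (a+b) * h (a+b)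
  have hsup : a * h a + b * h b < (a + b) * h (a + b) := by
    nlinarith [mul_lt_mul_of_pos_left hha ha0, mul_lt_mul_of_pos_left hhb hb0]
  -- the expression
  set E := ((a / Real.sin (a * Real.pi / 2)) ^ (a / b) *
        (Real.sin ((q - q1) * Real.pi / 2) / (q - q1)) ^ ((q - q1) / b) *
        (b / Real.sin (b * Real.pi / 2))) with hE
  have hA : (0:ℝ) < a / Real.sin (a * Real.pi / 2) := by positivity
  have hB : (0:ℝ) < Real.sin ((q - q1) * Real.pi / 2) / (q - q1) := by
    rw [hc]; positivity
  have hC : (0:ℝ) < b / Real.sin (b * Real.pi / 2) := by positivity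
  have hE0 : 0 < E := by
    rw [hE]
    positivity
  have hlogE : Real.log E < 0 := by
    rw [hE, Real.log_mul (by positivity) (ne_of_gt hC),
      Real.log_mul (by positivity) (by positivity),
      Real.log_rpow hA, Real.log_rpow hB]
    have hlA : Real.log (a / Real.sin (a * Real.pi / 2)) = h a := by
      rw [hh]; simp [Real.log_div (ne_of_gt ha0) (ne_of_gt hsa)]
    have hlB : Real.log (Real.sin ((q - q1) * Real.pi / 2) / (q - q1)) = -h (a + b) := by
      rw [hh, hc]
      simp [Real.log_div (ne_of_gt hsc) (by positivity : (0:ℝ) < a + b).ne']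
    have hlC : Real.log (b / Real.sin (b * Real.pi / 2)) = h b := by
      rw [hh]; simp [Real.log_div (ne_of_gt hb0) (ne_of_gt hsb)]
    rw [hlA, hlB, hlC, hc]
    have key : a * h a - (a + b) * h (a + b) + b * h b < 0 := by linarith
    calc a / b * h a + (a + b) / b * -h (a + b) + h b
        = (a * h a - (a + b) * h (a + b) + b * h b) / b := by field_simp; ring
      _ < 0 := div_neg_of_neg_of_pos key hb0
  have hE1 : E < 1 := by
    have := (Real.log_neg_iff hE0).mp hlogE
    exact this
  linarith
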